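/- Let ψ_t : 𝔻 → D_t be the normalized conformal maps (ψ_t(0)=0, ψ_t'(0)>0) onto the domains D_t bounded by the level curves {R = t²/2} of a weight R that is real-analytic near 𝕋, quadratically flat on 𝕋 (R = 0 and ∇R = 0 on 𝕋) with ΔR > 0 on 𝕋, chosen so that D_t increases with t and D_0 = 𝔻. Then the first variation of the boundary satisfies Re( ζ̄ ∂_t ψ_t(ζ) )|_{t=0} = (4ΔR(ζ))^{−1/2} for ζ ∈ 𝕋. -/

import Mathlib

/-- The (Euclidean) Laplacian on ℂ; the operator `Δ = ∂∂̄` equals `lap / 4`, so that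
`4ΔR = lap R`. -/
noncomputable def lap (Q : ℂ → ℝ) (z : ℂ) : ℝ :=
  iteratedFDeriv ℝ 2 Q z ![1, 1] + iteratedFDeriv ℝ 2 Q z ![Complex.I, Complex.I]


open Asymptotics Filter Metric

/-- Constant `o(t^2)` is zero. -/
lemma aux_const_zero {c : ℝ} (h : (fun t : ℝ => c * t ^ 2) =o[nhds 0] fun t => t ^ 2) :
    c = 0 := by
  by_contra hc
  have hc2 : 0 < |c| / 2 := by positivity
  have h2 := (isLittleO_iff.1 h) hc2
  have h3 : ∀ᶠ t in nhdsWithin (0:ℝ) {0}ᶜ, ‖c * t ^ 2‖ ≤ |c| / 2 * ‖t ^ 2‖ :=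
    h2.filter_mono nhdsWithin_le_nhds
  have h4 : ∀ᶠ t in nhdsWithin (0:ℝ) {0}ᶜ, t ≠ 0 := eventually_mem_nhdsWithin
  obtain ⟨t, h5, h6⟩ := (h3.and h4).exists
  have ht2 : (0:ℝ) < t ^ 2 := by positivity
  rw [norm_mul, Real.norm_eq_abs, Real.norm_eq_abs, abs_pow, sq_abs] at h5
  nlinarith [abs_pos.2 hc]

/-- Second-order Taylor expansion with cubic error for a real-analytic function that
vanishes to second order. -/
lemma aux_taylor {R : ℂ → ℝ} {ζ : ℂ} (h : AnalyticAt ℝ R ζ) (h0 : R ζ = 0)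
    (h1 : fderiv ℝ R ζ = 0) :
    (fun y : ℂ => R (ζ + y) - fderiv ℝ (fderiv ℝ R) ζ y y / 2) =O[nhds 0]
      fun y => ‖y‖ ^ 3 := by
  obtain ⟨p, hp⟩ := h
  have hO := hp.isBigO_sub_partialSum_pow 3
  obtain ⟨r, hpr⟩ := hp
  refine hO.congr_left fun y => ?_
  have e0 : p 0 (fun _ => y) = 0 := by
    have := hpr.factorial_smul y 0
    simpa [h0] using this
  have e1 : p 1 (fun _ => y) = 0 := by
    have := hpr.factorial_smul y 1
    simp only [Nat.factorial_one, one_smul] at this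
    rw [this]
    simp [iteratedFDeriv_one_apply, h1]
  have e2 : p 2 (fun _ => y) = fderiv ℝ (fderiv ℝ R) ζ y y / 2 := by
    have := hpr.factorial_smul y 2
    rw [iteratedFDeriv_two_apply] at this
    have h2 : (Nat.factorial 2) • p 2 (fun _ => y) = 2 * p 2 (fun _ => y) := by
      simp [Nat.factorial]
    rw [h2] at this
    linarith [this]
  have : p.partialSum 3 y = fderiv ℝ (fderiv ℝ R) ζ y y / 2 := by
    simp [FormalMultilinearSeries.partialSum, Finset.sum_range_succ, e0, e1, e2]
  rw [this]



lemma aux_bilin (B : ℂ →L[ℝ] ℂ →L[ℝ] ℝ) (ζ v : ℂ) (hζ : ζ.re ^ 2 + ζ.im ^ 2 = 1)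
    (htan : B (Complex.I * ζ) = 0) (hsym : B 1 Complex.I = B Complex.I 1) :
    B v v = ((starRingEnd ℂ) ζ * v).re ^ 2 * (B 1 1 + B Complex.I Complex.I) := by
  have hexp : ∀ z w : ℂ, B z w = z.re * w.re * B 1 1 + z.re * w.im * B 1 Complex.I
      + z.im * w.re * B Complex.I 1 + z.im * w.im * B Complex.I Complex.I := by
    intro z w
    have hz : z = z.re • (1:ℂ) + z.im • Complex.I := by
      apply Complex.ext <;> simp
    have hw : w = w.re • (1:ℂ) + w.im • Complex.I := by
      apply Complex.ext <;> simp
    conv_lhs => rw [hz, hw]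
    simp only [map_add, map_smul, ContinuousLinearMap.add_apply,
      ContinuousLinearMap.smul_apply, smul_eq_mul]
    ring
  have hIζre : (Complex.I * ζ).re = -ζ.im := by simp
  have hIζim : (Complex.I * ζ).im = ζ.re := by simp
  have h1 : ζ.im * B 1 1 = ζ.re * B Complex.I 1 := by
    have := congrArg (fun f : ℂ →L[ℝ] ℝ => f 1) htan
    simp only [ContinuousLinearMap.zero_apply] at this
    rw [hexp] at this
    simp only [hIζre, hIζim, Complex.one_re, Complex.one_im] at this
    linarith
  have h2 : ζ.im * B Complex.I 1 = ζ.re * B Complex.I Complex.I := by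
    have := congrArg (fun f : ℂ →L[ℝ] ℝ => f Complex.I) htan
    simp only [ContinuousLinearMap.zero_apply] at this
    rw [hexp] at this
    simp only [hIζre, hIζim, Complex.I_re, Complex.I_im] at this
    rw [hsym] at this
    linarith
  have ha : ((starRingEnd ℂ) ζ * v).re = ζ.re * v.re + ζ.im * v.im := by
    simp [Complex.mul_re]
  rw [hexp v v, ha, hsym]
  set x := ζ.re; set y := ζ.im; set p := v.re; set q := v.im
  set e11 := B 1 1; set eI1 := B Complex.I 1; set eII := B Complex.I Complex.I
  linear_combination (y*p^2 - 2*x*p*q - y*q^2) * h1 + (2*p*q*y + x*p^2 - x*q^2) * h2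
    - (p^2*e11 + 2*p*q*eI1 + q^2*eII) * hζ

set_option maxHeartbeats 1000000 in
/-- Let `ψ_t : 𝔻 → D_t` be the normalized conformal maps onto the
increasing domains `D_t` bounded by the level curves `{R = t²/2}` of a weight `R`
that is real-analytic near `𝕋` and quadratically flat on `𝕋` with `ΔR > 0` there,
with `D_0 = 𝔻`.  Then the normal velocity at `t = 0` satisfies
`Re(ζ̄ ∂_t ψ_t(ζ))|_{t=0} = (4ΔR(ζ))^{−1/2}` for `ζ ∈ 𝕋`. -/
theorem stmt_15 (R : ℂ → ℝ) (U : Set ℂ) (hU : IsOpen U)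
    (hUsph : Metric.sphere (0:ℂ) 1 ⊆ U)
    (hRan : AnalyticOnNhd ℝ R U)
    (hRflat : ∀ ζ ∈ Metric.sphere (0:ℂ) 1, R ζ = 0 ∧ fderiv ℝ R ζ = 0)
    (hRlap : ∀ ζ ∈ Metric.sphere (0:ℂ) 1, 0 < lap R ζ)
    (ψ : ℝ → ℂ → ℂ) (ε : ℝ) (hε : 0 < ε)
    (hψid : ∀ z ∈ Metric.ball (0:ℂ) 1, ψ 0 z = z)
    (hψhol : ∀ t : ℝ, |t| < ε → DifferentiableOn ℂ (ψ t) (Metric.ball (0:ℂ) 1) ∧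
      Set.InjOn (ψ t) (Metric.ball (0:ℂ) 1) ∧
      ContinuousOn (ψ t) (Metric.closedBall (0:ℂ) 1))
    (hψnorm : ∀ t : ℝ, |t| < ε →
      ψ t 0 = 0 ∧ (deriv (ψ t) 0).im = 0 ∧ 0 < (deriv (ψ t) 0).re)
    (hψlevel : ∀ t : ℝ, |t| < ε → ∀ ζ ∈ Metric.sphere (0:ℂ) 1, R (ψ t ζ) = t ^ 2 / 2)
    (hmono : ∀ s t : ℝ, |s| < ε → |t| < ε → s ≤ t →
      ψ s '' Metric.ball (0:ℂ) 1 ⊆ ψ t '' Metric.ball (0:ℂ) 1)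
    (hsmooth : ∀ ζ ∈ Metric.sphere (0:ℂ) 1, DifferentiableAt ℝ (fun t => ψ t ζ) 0) :
    ∀ ζ ∈ Metric.sphere (0:ℂ) 1,
      ((starRingEnd ℂ) ζ * deriv (fun t => ψ t ζ) 0).re = (lap R ζ) ^ (-(1:ℝ)/2) := by
  intro ζ hζ
  have hζU : ζ ∈ U := hUsph hζ
  have hζnorm : ‖ζ‖ = 1 := by simpa using hζ
  have hζsq : ζ.re ^ 2 + ζ.im ^ 2 = 1 := by
    have := Complex.normSq_eq_norm_sq ζ
    simp only [Complex.normSq_apply] at this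
    rw [hζnorm] at this
    nlinarith [this]
  have hε0 : |(0:ℝ)| < ε := by simpa using hε
  -- the second derivative as a bilinear map
  set B : ℂ →L[ℝ] ℂ →L[ℝ] ℝ := fderiv ℝ (fderiv ℝ R) ζ with hB
  have hF : AnalyticOnNhd ℝ (fderiv ℝ R) U := hRan.fderiv
  have hFB : HasFDerivAt (fderiv ℝ R) B ζ := (hF ζ hζU).differentiableAt.hasFDerivAt
  have hev : ∀ᶠ y in nhds ζ, HasFDerivAt R (fderiv ℝ R y) y := by
    filter_upwards [hU.mem_nhds hζU] with y hy
    exact (hRan y hy).differentiableAt.hasFDerivAt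
  have hsym : B 1 Complex.I = B Complex.I 1 :=
    second_derivative_symmetric_of_eventually_of_real hev hFB 1 Complex.I
  -- tangential direction annihilates B
  have htan : B (Complex.I * ζ) = 0 := by
    have hc : HasDerivAt (fun θ : ℝ => Complex.exp (θ * Complex.I) * ζ)
        (Complex.I * ζ) 0 := by
      have h1 : HasDerivAt (fun θ : ℝ => (θ : ℂ)) 1 0 :=
        (hasDerivAt_id (0:ℝ)).ofReal_comp
      have h2 : HasDerivAt (fun θ : ℝ => (θ : ℂ) * Complex.I) Complex.I 0 := by
        simpa using h1.mul_const Complex.I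
      have h3 := h2.cexp
      have h4 := h3.mul_const ζ
      simpa using h4
    have hmem : ∀ θ : ℝ, Complex.exp (θ * Complex.I) * ζ ∈ Metric.sphere (0:ℂ) 1 := by
      intro θ
      simp [norm_mul, Complex.norm_exp_ofReal_mul_I,
        hζnorm]
    have hconst : (fun θ : ℝ => fderiv ℝ R (Complex.exp (θ * Complex.I) * ζ))
        = fun _ => 0 := by
      funext θ
      exact (hRflat _ (hmem θ)).2
    have hchain : HasDerivAt
        (fun θ : ℝ => fderiv ℝ R (Complex.exp (θ * Complex.I) * ζ))
        (B (Complex.I * ζ)) 0 := by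
      have hFB' : HasFDerivAt (fderiv ℝ R) B (Complex.exp ((0:ℝ) * Complex.I) * ζ) := by
        simpa [Complex.exp_zero] using hFB
      exact hFB'.comp_hasDerivAt 0 hc
    rw [hconst] at hchain
    have := hasDerivAt_const (0:ℝ) (0 : ℂ →L[ℝ] ℝ)
    exact hchain.unique this
  -- lap in terms of B
  have hlapB : lap R ζ = B 1 1 + B Complex.I Complex.I := by
    rw [lap, iteratedFDeriv_two_apply, iteratedFDeriv_two_apply]
    simp [hB]
  -- ψ 0 ζ = ζ
  have hψ0ζ : ψ 0 ζ = ζ := by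
    have hcont : ContinuousWithinAt (ψ 0) (Metric.closedBall (0:ℂ) 1) ζ :=
      (hψhol 0 hε0).2.2 ζ (Metric.sphere_subset_closedBall hζ)
    have hne : (nhdsWithin ζ (Metric.ball (0:ℂ) 1)).NeBot := by
      rw [← mem_closure_iff_nhdsWithin_neBot, closure_ball (0:ℂ) one_ne_zero]
      exact Metric.sphere_subset_closedBall hζ
    have h1 : Tendsto (ψ 0) (nhdsWithin ζ (Metric.ball (0:ℂ) 1)) (nhds (ψ 0 ζ)) :=
      hcont.mono Metric.ball_subset_closedBall
    have h2 : Tendsto (ψ 0) (nhdsWithin ζ (Metric.ball (0:ℂ) 1)) (nhds ζ) := by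
      have hid : Tendsto (fun z : ℂ => z) (nhdsWithin ζ (Metric.ball (0:ℂ) 1)) (nhds ζ) :=
        tendsto_id.mono_left nhdsWithin_le_nhds
      refine hid.congr' ?_
      filter_upwards [eventually_mem_nhdsWithin] with z hz
      exact (hψid z hz).symm
    exact tendsto_nhds_unique h1 h2
  set v : ℂ := deriv (fun t => ψ t ζ) 0 with hv
  have hd : HasDerivAt (fun t => ψ t ζ) v 0 := (hsmooth ζ hζ).hasDerivAt
  -- B v v = 1
  have hBvv : B v v = 1 := by
    set w : ℝ → ℂ := fun t => ψ t ζ - ζ with hwdef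
    have hw : (fun t => w t - t • v) =o[nhds 0] fun t : ℝ => t := by
      have := hasDerivAt_iff_isLittleO.1 hd
      simpa [hψ0ζ, w] using this
    have hvO : (fun t : ℝ => t • v) =O[nhds 0] fun t : ℝ => t := by
      rw [isBigO_iff]
      refine ⟨‖v‖, Filter.Eventually.of_forall fun t => ?_⟩
      simp [norm_smul, mul_comm]
    have hwO : (fun t : ℝ => w t) =O[nhds 0] fun t : ℝ => t := by
      have := hw.isBigO.add hvO
      exact this.congr_left fun t => by abel
    have hw0 : Tendsto w (nhds 0) (nhds 0) := by
      have ht0 : Tendsto (fun t : ℝ => t) (nhds (0:ℝ)) (nhds 0) := tendsto_id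
      exact hwO.trans_tendsto ht0
    have hT := aux_taylor (hRan ζ hζU) (hRflat ζ hζ).1 (hRflat ζ hζ).2
    have hT2 : (fun t : ℝ => R (ζ + w t) - B (w t) (w t) / 2) =O[nhds 0]
        fun t => ‖w t‖ ^ 3 := hT.comp_tendsto hw0
    have hw3 : (fun t : ℝ => ‖w t‖ ^ 3) =O[nhds 0] fun t : ℝ => t ^ 3 := by
      have := (hwO.pow 3).norm_left
      exact this.congr_left fun t => by rw [norm_pow]
    have ht32 : (fun t : ℝ => t ^ 3) =o[nhds 0] fun t : ℝ => t ^ 2 := by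
      have h1 : (fun t : ℝ => t) =o[nhds 0] fun _ : ℝ => (1:ℝ) := by
        rw [isLittleO_one_iff]
        exact tendsto_id
      have := h1.mul_isBigO (isBigO_refl (fun t : ℝ => t ^ 2) (nhds 0))
      exact (this.congr_left fun t => by ring).congr_right fun t => by ring
    have hR1 : (fun t : ℝ => R (ζ + w t) - B (w t) (w t) / 2) =o[nhds 0]
        fun t : ℝ => t ^ 2 := (hT2.trans hw3).trans_isLittleO ht32
    have hBerr : (fun t : ℝ => B (w t) (w t) - t ^ 2 * B v v) =o[nhds 0]
        fun t : ℝ => t ^ 2 := by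
      have hbound1 : (fun t : ℝ => B (w t - t • v) (w t)) =O[nhds 0]
          fun t => ‖w t - t • v‖ * ‖w t‖ := by
        rw [isBigO_iff]
        refine ⟨‖B‖, Filter.Eventually.of_forall fun t => ?_⟩
        calc ‖B (w t - t • v) (w t)‖ ≤ ‖B‖ * ‖w t - t • v‖ * ‖w t‖ :=
              B.le_opNorm₂ _ _
          _ ≤ ‖B‖ * ‖‖w t - t • v‖ * ‖w t‖‖ := by
              rw [Real.norm_of_nonneg (by positivity), mul_assoc]
      have hbound2 : (fun t : ℝ => B (t • v) (w t - t • v)) =O[nhds 0]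
          fun t => ‖t • v‖ * ‖w t - t • v‖ := by
        rw [isBigO_iff]
        refine ⟨‖B‖, Filter.Eventually.of_forall fun t => ?_⟩
        calc ‖B (t • v) (w t - t • v)‖ ≤ ‖B‖ * ‖t • v‖ * ‖w t - t • v‖ :=
              B.le_opNorm₂ _ _
          _ ≤ ‖B‖ * ‖‖t • v‖ * ‖w t - t • v‖‖ := by
              rw [Real.norm_of_nonneg (by positivity), mul_assoc]
      have ho1 : (fun t : ℝ => ‖w t - t • v‖ * ‖w t‖) =o[nhds 0]
          fun t : ℝ => t * t := hw.norm_left.mul_isBigO hwO.norm_left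
      have ho2 : (fun t : ℝ => ‖t • v‖ * ‖w t - t • v‖) =o[nhds 0]
          fun t : ℝ => t * t := hvO.norm_left.mul_isLittleO hw.norm_left
      have h1 : (fun t : ℝ => B (w t - t • v) (w t)) =o[nhds 0] fun t : ℝ => t ^ 2 :=
        (hbound1.trans_isLittleO ho1).congr_right fun t => by ring
      have h2 : (fun t : ℝ => B (t • v) (w t - t • v)) =o[nhds 0] fun t : ℝ => t ^ 2 :=
        (hbound2.trans_isLittleO ho2).congr_right fun t => by ring
      refine (h1.add h2).congr_left fun t => ?_
      simp only [map_sub, map_smul, ContinuousLinearMap.sub_apply,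
        ContinuousLinearMap.smul_apply, ContinuousLinearMap.coe_sub', Pi.sub_apply,
        smul_eq_mul]
      ring
    have hlevel : ∀ᶠ t : ℝ in nhds 0, R (ζ + w t) = t ^ 2 / 2 := by
      filter_upwards [Metric.ball_mem_nhds (0:ℝ) hε] with t ht
      have htε : |t| < ε := by
        rwa [Metric.mem_ball, Real.dist_eq, sub_zero] at ht
      have := hψlevel t htε ζ hζ
      simpa [w] using this
    have hfinal : (fun t : ℝ => (1/2 - B v v / 2) * t ^ 2) =o[nhds 0]
        fun t : ℝ => t ^ 2 := by
      have hsum := hR1.add (hBerr.const_mul_left (1/2))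
      refine hsum.congr' ?_ EventuallyEq.rfl
      filter_upwards [hlevel] with t ht
      rw [ht]
      ring
    have := aux_const_zero hfinal
    linarith
  -- sign
  have hout : ∀ t : ℝ, 0 < t → t < ε → 1 ≤ ‖ψ t ζ‖ := by
    intro t ht0 htε
    have ht : |t| < ε := by rwa [abs_of_pos ht0]
    by_contra hlt
    push_neg at hlt
    have hmem : ψ t ζ ∈ Metric.ball (0:ℂ) 1 := by
      simpa [Metric.mem_ball, dist_zero_right] using hlt
    have hb0 : ψ 0 '' Metric.ball (0:ℂ) 1 = Metric.ball (0:ℂ) 1 := by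
      ext z
      constructor
      · rintro ⟨x, hx, rfl⟩
        rwa [hψid x hx]
      · intro hz
        exact ⟨z, hz, hψid z hz⟩
    have hsub := hmono 0 t hε0 ht ht0.le
    rw [hb0] at hsub
    obtain ⟨z0, hz0, hz0eq⟩ := hsub hmem
    set r : ℝ := (1 + ‖z0‖) / 2 with hr
    have hz0n : ‖z0‖ < 1 := by simpa [Metric.mem_ball, dist_zero_right] using hz0
    have hr1 : r < 1 := by rw [hr]; linarith
    have hrz : ‖z0‖ < r := by rw [hr]; linarith
    have hr0 : 0 < r := by rw [hr]; positivity
    have han : AnalyticOnNhd ℂ (ψ t) (Metric.ball (0:ℂ) 1) :=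
      (hψhol t ht).1.analyticOnNhd Metric.isOpen_ball
    have hVopen : IsOpen (ψ t '' Metric.ball (0:ℂ) r) := by
      rcases han.is_constant_or_isOpen (convex_ball (0:ℂ) 1).isPreconnected with
        hconst | hopen
      · obtain ⟨w0, hw0⟩ := hconst
        have h01 : (0:ℂ) ∈ Metric.ball (0:ℂ) 1 := by simp
        have h05 : (1/2 : ℂ) ∈ Metric.ball (0:ℂ) 1 := by
          rw [Metric.mem_ball, dist_zero_right]
          rw [show (1/2 : ℂ) = ((1/2 : ℝ) : ℂ) by norm_num, Complex.norm_real]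
          rw [Real.norm_eq_abs, abs_of_pos (by norm_num : (0:ℝ) < 1/2)]
          norm_num
        have := (hψhol t ht).2.1 h01 h05 (by rw [hw0 0 h01, hw0 _ h05])
        norm_num at this
      · exact hopen _ (Metric.ball_subset_ball hr1.le) Metric.isOpen_ball
    have hwV : ψ t ζ ∈ ψ t '' Metric.ball (0:ℂ) r :=
      ⟨z0, by simpa [Metric.mem_ball, dist_zero_right] using hrz, hz0eq⟩
    have hne : (nhdsWithin (1:ℝ) (Set.Ioo r 1)).NeBot := by
      apply mem_closure_iff_nhdsWithin_neBot.1
      rw [closure_Ioo hr1.ne]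
      exact Set.right_mem_Icc.2 hr1.le
    have hu : Tendsto (fun s : ℝ => (s:ℂ) * ζ) (nhdsWithin 1 (Set.Ioo r 1))
        (nhdsWithin ζ (Metric.closedBall (0:ℂ) 1)) := by
      apply tendsto_nhdsWithin_of_tendsto_nhds_of_eventually_within
      · have hc : Continuous (fun s : ℝ => (s:ℂ) * ζ) :=
          Complex.continuous_ofReal.mul continuous_const
        have h1 := hc.tendsto 1
        simp only [Complex.ofReal_one, one_mul] at h1
        exact h1.mono_left nhdsWithin_le_nhds
      · filter_upwards [eventually_mem_nhdsWithin] with s hs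
        have hnorm : ‖(s:ℂ) * ζ‖ = |s| := by
          rw [norm_mul, hζnorm, mul_one, Complex.norm_real, Real.norm_eq_abs]
        have hs0 : 0 < s := lt_trans hr0 hs.1
        simp [Metric.mem_closedBall, dist_zero_right, hnorm, abs_of_pos hs0, hs.2.le, hζnorm]
    have hcont : ContinuousWithinAt (ψ t) (Metric.closedBall (0:ℂ) 1) ζ :=
      (hψhol t ht).2.2 ζ (Metric.sphere_subset_closedBall hζ)
    have htend : Tendsto (fun s : ℝ => ψ t ((s:ℂ) * ζ)) (nhdsWithin 1 (Set.Ioo r 1))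
        (nhds (ψ t ζ)) := hcont.tendsto.comp hu
    have hev2 : ∀ᶠ s : ℝ in nhdsWithin (1:ℝ) (Set.Ioo r 1),
        ψ t ((s:ℂ) * ζ) ∈ ψ t '' Metric.ball (0:ℂ) r :=
      htend.eventually (hVopen.mem_nhds hwV)
    obtain ⟨s, hsV, hsIoo⟩ := (hev2.and eventually_mem_nhdsWithin).exists
    obtain ⟨z', hz'r, hz'eq⟩ := hsV
    have hs0 : 0 < s := lt_trans hr0 hsIoo.1
    have hsnorm : ‖(s:ℂ) * ζ‖ = s := by
      rw [norm_mul, hζnorm, mul_one, Complex.norm_real, Real.norm_eq_abs, abs_of_pos hs0]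
    have hsball : (s:ℂ) * ζ ∈ Metric.ball (0:ℂ) 1 := by
      simp [Metric.mem_ball, dist_zero_right, hsnorm, hsIoo.2, hζnorm, abs_of_pos hs0]
    have hz'ball : z' ∈ Metric.ball (0:ℂ) 1 :=
      Metric.ball_subset_ball hr1.le hz'r
    have heq : z' = (s:ℂ) * ζ := (hψhol t ht).2.1 hz'ball hsball hz'eq
    have : ‖z'‖ < r := by simpa [Metric.mem_ball, dist_zero_right] using hz'r
    rw [heq, hsnorm] at this
    exact absurd hsIoo.1 (not_lt.2 this.le)
  have hsign : 0 ≤ ((starRingEnd ℂ) ζ * v).re := by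
    set g : ℝ → ℝ := fun τ => ((ψ τ ζ).re) ^ 2 + ((ψ τ ζ).im) ^ 2 with hg
    have hgder : HasDerivAt g (2 * (ζ.re * v.re + ζ.im * v.im)) 0 := by
      have hre : HasDerivAt (fun τ : ℝ => (ψ τ ζ).re) v.re 0 := by
        have := (Complex.reCLM.hasFDerivAt (x := ψ 0 ζ)).comp_hasDerivAt 0 hd
        exact this
      have him : HasDerivAt (fun τ : ℝ => (ψ τ ζ).im) v.im 0 := by
        have := (Complex.imCLM.hasFDerivAt (x := ψ 0 ζ)).comp_hasDerivAt 0 hd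
        exact this
      have h1 := (hre.pow 2).add (him.pow 2)
      refine h1.congr_deriv ?_
      rw [hψ0ζ]
      ring
    have hg0 : g 0 = 1 := by
      rw [hg]
      simp only [hψ0ζ]
      exact hζsq
    have hslope : Tendsto (slope g 0) (nhdsWithin 0 (Set.Ioi 0))
        (nhds (2 * (ζ.re * v.re + ζ.im * v.im))) := by
      have := hasDerivAt_iff_tendsto_slope.1 hgder
      exact this.mono_left (nhdsWithin_mono 0 (fun x hx => ne_of_gt hx))
    have hslope_nonneg : ∀ᶠ s in nhdsWithin (0:ℝ) (Set.Ioi 0), 0 ≤ slope g 0 s := by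
      have hεev : ∀ᶠ s in nhdsWithin (0:ℝ) (Set.Ioi 0), s < ε :=
        (Filter.Tendsto.eventually_lt_const hε (tendsto_id.mono_left nhdsWithin_le_nhds))
      filter_upwards [hεev, eventually_mem_nhdsWithin] with s hsε hs
      have hs0 : 0 < s := hs
      have hout' := hout s hs0 hsε
      have hgs : 1 ≤ g s := by
        have h2 : 1 ≤ ‖ψ s ζ‖ ^ 2 := by nlinarith [hout', norm_nonneg (ψ s ζ)]
        have h3 : ‖ψ s ζ‖ ^ 2 = ((ψ s ζ).re) ^ 2 + ((ψ s ζ).im) ^ 2 := by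
          rw [Complex.sq_norm, Complex.normSq_apply]
          ring
        simp only [hg]
        nlinarith [h2, h3]
      rw [slope_def_field]
      have h4 : 0 ≤ g s - g 0 := by rw [hg0]; linarith
      exact div_nonneg h4 (by linarith)
    have hfin : 0 ≤ 2 * (ζ.re * v.re + ζ.im * v.im) :=
      ge_of_tendsto hslope hslope_nonneg
    have ha : ((starRingEnd ℂ) ζ * v).re = ζ.re * v.re + ζ.im * v.im := by
      simp [Complex.mul_re]
    rw [ha]
    linarith
  -- conclusion
  have hkey := aux_bilin B ζ v hζsq htan hsym
  rw [hBvv] at hkey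
  rw [← hlapB] at hkey
  have hL : 0 < lap R ζ := hRlap ζ hζ
  set a := ((starRingEnd ℂ) ζ * v).re
  have ha2 : a ^ 2 = (lap R ζ)⁻¹ := by
    field_simp
    linarith [hkey]
  have : a = Real.sqrt ((lap R ζ)⁻¹) := by
    rw [← ha2, Real.sqrt_sq hsign]
  rw [this]
  rw [show (-(1:ℝ)/2) = -(1/2 : ℝ) by norm_num, Real.rpow_neg hL.le,
    Real.sqrt_inv, Real.sqrt_eq_rpow]
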